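/- arXiv:2506.01193 — 7 statements merged into one kernel-verified Lean document; each statement's English description precedes it below -/
import Mathlib

section
/- For any n×n complex matrix A and every integer j ≥ 0, the double-argument formula holds: φ_j(2A) = 2^{-j} ( φ_0(A)·φ_j(A) + Σ_{k=1}^{j} φ_k(A)/(j−k)! ). -/
open NormedSpace Finset

lemma fact_ne (a : ℕ) : ((a.factorial : ℂ)) ≠ 0 :=
  Nat.cast_ne_zero.2 a.factorial_ne_zero

lemma binom_sum (N : ℕ) :
    ∑ i ∈ range (N + 1), ((i.factorial : ℂ))⁻¹ * (((N - i).factorial : ℂ))⁻¹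
      = 2 ^ N * ((N.factorial : ℂ))⁻¹ := by
  have h : ∀ i ∈ range (N + 1),
      ((i.factorial : ℂ))⁻¹ * (((N - i).factorial : ℂ))⁻¹
        = (N.choose i : ℂ) * ((N.factorial : ℂ))⁻¹ := by
    intro i hi
    rw [mem_range, Nat.lt_succ_iff] at hi
    have key : ((N.choose i : ℂ)) * (i.factorial : ℂ) * ((N - i).factorial : ℂ)
        = (N.factorial : ℂ) := by
      exact_mod_cast congrArg Nat.cast (Nat.choose_mul_factorial_mul_factorial hi)
    have h1 := fact_ne i; have h2 := fact_ne (N - i); have h3 := fact_ne N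
    field_simp
    linear_combination -key
  rw [sum_congr rfl h, ← sum_mul]
  norm_cast
  rw [Nat.sum_range_choose]

lemma key_identity (m j : ℕ) :
    (∑ pq ∈ antidiagonal m, ((pq.1.factorial : ℂ))⁻¹ * (((pq.2 + j).factorial : ℂ))⁻¹)
      + ∑ k ∈ Icc 1 j, (((j - k).factorial : ℂ))⁻¹ * (((m + k).factorial : ℂ))⁻¹
    = 2 ^ (m + j) * (((m + j).factorial : ℂ))⁻¹ := by
  rw [Finset.Nat.sum_antidiagonal_eq_sum_range_succ_mk]
  have h1 : ∑ p ∈ range (m + 1), ((p.factorial : ℂ))⁻¹ * (((m - p + j).factorial : ℂ))⁻¹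
      = ∑ p ∈ range (m + 1), ((p.factorial : ℂ))⁻¹ * ((((m + j) - p).factorial : ℂ))⁻¹ := by
    refine sum_congr rfl fun p hp => ?_
    rw [mem_range, Nat.lt_succ_iff] at hp
    have : m - p + j = m + j - p := by omega
    rw [this]
  have h2 : ∑ k ∈ Icc 1 j, (((j - k).factorial : ℂ))⁻¹ * (((m + k).factorial : ℂ))⁻¹
      = ∑ i ∈ Ico (m + 1) (m + j + 1), ((i.factorial : ℂ))⁻¹ * ((((m + j) - i).factorial : ℂ))⁻¹ := by
    refine Finset.sum_nbij' (fun k => m + k) (fun i => i - m) ?_ ?_ ?_ ?_ ?_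
    · intro k hk; simp only [mem_Icc] at hk; simp only [mem_Ico]; omega
    · intro i hi; simp only [mem_Ico] at hi; simp only [mem_Icc]; omega
    · intro k hk; show m + k - m = k; omega
    · intro i hi; simp only [mem_Ico] at hi; show m + (i - m) = i; omega
    · intro k hk; simp only [mem_Icc] at hk
      have e1 : j - k = m + j - (m + k) := by omega
      rw [e1, mul_comm]
  rw [h1, h2, range_eq_Ico]
  rw [Finset.sum_Ico_consecutive _ (by omega) (by omega)]
  rw [← range_eq_Ico, show m + j + 1 = (m + j) + 1 by rfl]
  exact binom_sum (m + j)

/-- The matrix `φ`-functions: `φ_0(A) = exp(A)` and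
`φ_j(A) = ∑_{k=0}^∞ A^k/(k+j)!` for `j ≥ 1`. -/
noncomputable def phiMat {n : ℕ} (j : ℕ) (A : Matrix (Fin n) (Fin n) ℂ) :
    Matrix (Fin n) (Fin n) ℂ :=
  if j = 0 then NormedSpace.exp A
  else ∑' k : ℕ, (((k + j).factorial : ℂ))⁻¹ • A ^ k

section main
attribute [local instance] Matrix.linftyOpNormedRing Matrix.linftyOpNormedAlgebra
variable {n : ℕ}

lemma phiMat_eq_tsum (j : ℕ) (A : Matrix (Fin n) (Fin n) ℂ) :
    phiMat j A = ∑' k : ℕ, (((k + j).factorial : ℂ))⁻¹ • A ^ k := by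
  unfold phiMat
  split
  · next h => subst h; rw [exp_eq_tsum ℂ]; simp
  · rfl

lemma phi_summable_norm (j : ℕ) (A : Matrix (Fin n) (Fin n) ℂ) :
    Summable fun k : ℕ => ‖(((k + j).factorial : ℂ))⁻¹ • A ^ k‖ := by
  refine Summable.of_nonneg_of_le (fun k => norm_nonneg _) (fun k => ?_)
    (norm_expSeries_summable' (𝕂 := ℂ) A)
  rw [norm_smul, norm_smul]
  refine mul_le_mul_of_nonneg_right ?_ (norm_nonneg _)
  rw [norm_inv, norm_inv]
  refine inv_anti₀ ?_ ?_
  · simpa using Nat.factorial_pos k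
  · simp only [Complex.norm_natCast]
    exact_mod_cast Nat.factorial_le (by omega : k ≤ k + j)

lemma phi_summable (j : ℕ) (A : Matrix (Fin n) (Fin n) ℂ) :
    Summable fun k : ℕ => (((k + j).factorial : ℂ))⁻¹ • A ^ k :=
  (phi_summable_norm j A).of_norm
end main

section main2
attribute [local instance] Matrix.linftyOpNormedRing Matrix.linftyOpNormedAlgebra

/-- Double-argument formula:
`φ_j(2A) = 2^{-j} (φ_0(A)·φ_j(A) + ∑_{k=1}^{j} φ_k(A)/(j−k)!)`. -/
theorem phiMat_double_argument {n : ℕ} (A : Matrix (Fin n) (Fin n) ℂ) (j : ℕ) :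
    phiMat j ((2 : ℂ) • A) =
      ((2 : ℂ) ^ j)⁻¹ •
        (phiMat 0 A * phiMat j A +
          ∑ k ∈ Finset.Icc 1 j, (((j - k).factorial : ℂ))⁻¹ • phiMat k A) := by
  simp only [phiMat_eq_tsum]
  have hprod :
      (∑' k : ℕ, (((k + 0).factorial : ℂ))⁻¹ • A ^ k) *
        (∑' k : ℕ, (((k + j).factorial : ℂ))⁻¹ • A ^ k)
      = ∑' m : ℕ, (∑ pq ∈ antidiagonal m,
          ((pq.1.factorial : ℂ))⁻¹ * (((pq.2 + j).factorial : ℂ))⁻¹) • A ^ m := by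
    refine (tsum_mul_tsum_eq_tsum_sum_antidiagonal_of_summable_norm
      (phi_summable_norm 0 A) (phi_summable_norm j A)).trans ?_
    refine tsum_congr fun m => ?_
    rw [Finset.sum_smul]
    refine Finset.sum_congr rfl fun pq hpq => ?_
    rw [Finset.HasAntidiagonal.mem_antidiagonal] at hpq
    rw [smul_mul_smul_comm, ← pow_add, hpq, Nat.add_zero]
  have hsum :
      (∑ k ∈ Finset.Icc 1 j, (((j - k).factorial : ℂ))⁻¹ •
          ∑' m : ℕ, (((m + k).factorial : ℂ))⁻¹ • A ^ m)
      = ∑' m : ℕ, (∑ k ∈ Finset.Icc 1 j,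
          (((j - k).factorial : ℂ))⁻¹ * (((m + k).factorial : ℂ))⁻¹) • A ^ m := by
    symm
    calc ∑' m : ℕ, (∑ k ∈ Finset.Icc 1 j,
            (((j - k).factorial : ℂ))⁻¹ * (((m + k).factorial : ℂ))⁻¹) • A ^ m
        = ∑' m : ℕ, ∑ k ∈ Finset.Icc 1 j,
            (((j - k).factorial : ℂ))⁻¹ • ((((m + k).factorial : ℂ))⁻¹ • A ^ m) := by
          refine tsum_congr fun m => ?_
          rw [Finset.sum_smul]
          exact Finset.sum_congr rfl fun k _ => mul_smul _ _ _
      _ = ∑ k ∈ Finset.Icc 1 j, ∑' m : ℕ,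
            (((j - k).factorial : ℂ))⁻¹ • ((((m + k).factorial : ℂ))⁻¹ • A ^ m) :=
          Summable.tsum_finsetSum fun k _ => (phi_summable k A).const_smul _
      _ = ∑ k ∈ Finset.Icc 1 j, (((j - k).factorial : ℂ))⁻¹ •
            ∑' m : ℕ, (((m + k).factorial : ℂ))⁻¹ • A ^ m :=
          Finset.sum_congr rfl fun k _ => Summable.tsum_const_smul _ (phi_summable k A)
  have hS1 : Summable fun m : ℕ => (∑ pq ∈ antidiagonal m,
      ((pq.1.factorial : ℂ))⁻¹ * (((pq.2 + j).factorial : ℂ))⁻¹) • A ^ m := by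
    refine ((summable_norm_sum_mul_antidiagonal_of_summable_norm
      (phi_summable_norm 0 A) (phi_summable_norm j A)).of_norm).congr fun m => ?_
    rw [Finset.sum_smul]
    refine Finset.sum_congr rfl fun pq hpq => ?_
    rw [Finset.HasAntidiagonal.mem_antidiagonal] at hpq
    rw [smul_mul_smul_comm, ← pow_add, hpq, Nat.add_zero]
  have hS2 : Summable fun m : ℕ => (∑ k ∈ Finset.Icc 1 j,
      (((j - k).factorial : ℂ))⁻¹ * (((m + k).factorial : ℂ))⁻¹) • A ^ m := by
    refine (summable_sum (s := Finset.Icc 1 j)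
      (f := fun k m => (((j - k).factorial : ℂ))⁻¹ • ((((m + k).factorial : ℂ))⁻¹ • A ^ m))
      fun k _ => (phi_summable k A).const_smul _).congr fun m => ?_
    rw [Finset.sum_smul]
    exact Finset.sum_congr rfl fun k _ => (mul_smul _ _ _).symm
  rw [hprod, hsum, ← Summable.tsum_add hS1 hS2]
  have hk : ∀ m : ℕ, ((∑ pq ∈ antidiagonal m,
        ((pq.1.factorial : ℂ))⁻¹ * (((pq.2 + j).factorial : ℂ))⁻¹) • A ^ m
      + (∑ k ∈ Finset.Icc 1 j,
        (((j - k).factorial : ℂ))⁻¹ * (((m + k).factorial : ℂ))⁻¹) • A ^ m)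
      = ((2 : ℂ) ^ j) • ((((m + j).factorial : ℂ))⁻¹ • ((2 : ℂ) • A) ^ m) := by
    intro m
    rw [← add_smul, key_identity, smul_pow, smul_smul, smul_smul]
    congr 1
    rw [pow_add]
    ring
  rw [tsum_congr hk, Summable.tsum_const_smul _ (phi_summable j ((2 : ℂ) • A)), smul_smul,
    inv_mul_cancel₀ (pow_ne_zero _ two_ne_zero), one_smul]
end main2
end

section
/- Let A be an n×n complex matrix, p a positive integer, E = [I, 0, ..., 0] ∈ ℂ^{n×np}, J = J_p(0) ⊗ I where J_p(0) is the p×p nilpotent Jordan block, and W the block upper triangular matrix [[A, E],[0, J]] of size n(p+1). Then the first block row of exp(W) equals [exp(A), φ_1(A), φ_2(A), ..., φ_p(A)]. -/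
/-- The block upper triangular matrix `W = [[A, E],[0, J]]` of size `n(p+1)`,
where `E = [I, 0, …, 0] ∈ ℂ^{n×np}` and `J = J_p(0) ⊗ I_n` with `J_p(0)` the
`p×p` nilpotent Jordan block.  Block row/column indices range over `Fin (p+1)`:
block `(0,0)` is `A`, and all blocks on the block superdiagonal (which make up
`E` and `J`) are the identity; everything else vanishes. -/
noncomputable def blockW {n : ℕ} (p : ℕ) (A : Matrix (Fin n) (Fin n) ℂ) :
    Matrix (Fin (p + 1) × Fin n) (Fin (p + 1) × Fin n) ℂ :=
  fun x y =>
    if x.1 = 0 ∧ y.1 = 0 then A x.2 y.2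
    else if (y.1 : ℕ) = (x.1 : ℕ) + 1 then (if x.2 = y.2 then 1 else 0) else 0

section Aux

open NormedSpace

/-- Entrywise `HasSum` from a matrix `HasSum`. -/
lemma matrix_hasSum_apply {ι κ : Type*} {f : ℕ → Matrix ι κ ℂ} {S : Matrix ι κ ℂ}
    (h : HasSum f S) (x : ι) (y : κ) : HasSum (fun k => f k x y) (S x y) :=
  Pi.hasSum.1 (Pi.hasSum.1 h x) y

lemma hasSum_exp_entry {ι : Type*} [Fintype ι] [DecidableEq ι] (M : Matrix ι ι ℂ) (x y : ι) :
    HasSum (fun k : ℕ => ((k.factorial : ℂ))⁻¹ * (M ^ k) x y) (exp M x y) := by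
  have h : HasSum (fun k : ℕ => ((k.factorial : ℂ))⁻¹ • M ^ k) (exp M) := by
    letI : SeminormedRing (Matrix ι ι ℂ) := Matrix.linftyOpSemiNormedRing
    letI : NormedRing (Matrix ι ι ℂ) := Matrix.linftyOpNormedRing
    letI : NormedAlgebra ℂ (Matrix ι ι ℂ) := Matrix.linftyOpNormedAlgebra
    exact exp_series_hasSum_exp' M
  simpa [Matrix.smul_apply, smul_eq_mul] using matrix_hasSum_apply h x y

lemma summable_phi_series {m : ℕ} (j : ℕ) (A : Matrix (Fin m) (Fin m) ℂ) :
    Summable (fun k : ℕ => (((k + j).factorial : ℂ))⁻¹ • A ^ k) := by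
  letI : SeminormedRing (Matrix (Fin m) (Fin m) ℂ) := Matrix.linftyOpSemiNormedRing
  letI : NormedRing (Matrix (Fin m) (Fin m) ℂ) := Matrix.linftyOpNormedRing
  letI : NormedAlgebra ℂ (Matrix (Fin m) (Fin m) ℂ) := Matrix.linftyOpNormedAlgebra
  refine Summable.of_norm_bounded (norm_expSeries_summable' (𝕂 := ℂ) A) ?_
  intro k
  rw [norm_smul, norm_smul]
  refine mul_le_mul_of_nonneg_right ?_ (norm_nonneg _)
  rw [norm_inv, norm_inv, Complex.norm_natCast, Complex.norm_natCast]
  have h1 : (0:ℝ) < (k.factorial : ℝ) := by positivity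
  rw [inv_le_inv₀ (by positivity) h1]
  exact_mod_cast Nat.factorial_le (Nat.le_add_right k j)

lemma phiMat_apply {m : ℕ} (j : ℕ) (A : Matrix (Fin m) (Fin m) ℂ) (a b : Fin m) :
    phiMat j A a b = ∑' k : ℕ, (((k + j).factorial : ℂ))⁻¹ * (A ^ k) a b := by
  rcases eq_or_ne j 0 with rfl | hj
  · simp only [phiMat, if_pos, if_true]
    rw [← (hasSum_exp_entry A a b).tsum_eq]
    simp
  · simp only [phiMat, if_neg hj]
    have h := (summable_phi_series j A).hasSum
    have h2 := matrix_hasSum_apply h a b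
    rw [← h2.tsum_eq]
    exact tsum_congr fun k => by simp [Matrix.smul_apply, smul_eq_mul]

lemma blockW_pow_apply {n : ℕ} {p : ℕ} (A : Matrix (Fin n) (Fin n) ℂ) (k : ℕ)
    (j : Fin (p + 1)) (a b : Fin n) :
    ((blockW p A) ^ k) (0, a) (j, b) =
      if (j : ℕ) ≤ k then (A ^ (k - (j : ℕ))) a b else 0 := by
  induction k generalizing j b with
  | zero =>
    rcases eq_or_ne j 0 with rfl | hj
    · simp [Matrix.one_apply, Prod.ext_iff]
    · have hjv : (j : ℕ) ≠ 0 := by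
        intro h; exact hj (Fin.ext (by rw [h, Fin.val_zero]))
      rw [pow_zero, if_neg (by omega), Matrix.one_apply_ne]
      intro h
      exact hj (Prod.ext_iff.1 h).1.symm
  | succ k ih =>
    rw [pow_succ, Matrix.mul_apply, Fintype.sum_prod_type]
    rcases eq_or_ne j 0 with rfl | hj
    · have hW : ∀ (i : Fin (p + 1)) (c : Fin n),
          (blockW p A) (i, c) ((0 : Fin (p + 1)), b) = if i = 0 then A c b else 0 := by
        intro i c
        rcases eq_or_ne i 0 with rfl | hi
        · simp [blockW]
        · simp [blockW, hi]
      simp_rw [hW]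
      rw [Finset.sum_eq_single (0 : Fin (p + 1))]
      · simp_rw [if_true, ih]
        simp only [Fin.val_zero, Nat.zero_le, if_true, Nat.sub_zero]
        rw [← Matrix.mul_apply, ← pow_succ]
      · intro i _ hi
        simp [hi]
      · simp
    · have hjv : (j : ℕ) ≠ 0 := by intro h; exact hj (Fin.ext (by rw [h, Fin.val_zero]))
      have hW : ∀ (i : Fin (p + 1)) (c : Fin n),
          (blockW p A) (i, c) (j, b) =
            if (j : ℕ) = (i : ℕ) + 1 then (if c = b then 1 else 0) else 0 := by
        intro i c
        have : ¬ (i = 0 ∧ j = 0) := fun h => hj h.2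
        simp [blockW, this]
      simp_rw [hW]
      have hj1 : (j : ℕ) - 1 < p + 1 := by omega
      set i₀ : Fin (p + 1) := ⟨(j : ℕ) - 1, hj1⟩ with hi₀
      rw [Finset.sum_eq_single i₀]
      · have hcond : (j : ℕ) = (i₀ : ℕ) + 1 := by
          simp only [hi₀]
          omega
        simp_rw [if_pos hcond, mul_ite, mul_one, mul_zero]
        rw [Finset.sum_ite_eq' Finset.univ b]
        simp only [Finset.mem_univ, if_pos]
        rw [ih i₀]
        have : (i₀ : ℕ) = (j : ℕ) - 1 := rfl
        by_cases hle : (j : ℕ) ≤ k + 1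
        · rw [if_pos (by omega), if_pos hle]
          have hexp : k - (i₀ : ℕ) = k + 1 - (j : ℕ) := by omega
          rw [hexp]
        · rw [if_neg (by omega), if_neg hle]
      · intro i _ hi
        have : (j : ℕ) ≠ (i : ℕ) + 1 := by
          intro h
          apply hi
          apply Fin.ext
          have h0 : (i₀ : ℕ) = (j : ℕ) - 1 := rfl
          omega
        simp [this]
      · simp

end Aux

/-- The first block row of `exp(W)` equals `[exp(A), φ_1(A), φ_2(A), …, φ_p(A)]`. -/
theorem exp_blockW_first_block_row {n : ℕ} (p : ℕ) (hp : 0 < p)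
    (A : Matrix (Fin n) (Fin n) ℂ) (j : Fin (p + 1)) (a b : Fin n) :
    NormedSpace.exp (blockW p A) (0, a) (j, b) = phiMat (j : ℕ) A a b := by
  have hW := hasSum_exp_entry (blockW p A) (0, a) (j, b)
  rw [← hW.tsum_eq, phiMat_apply]
  have h1 : ∀ k : ℕ, ((k.factorial : ℂ))⁻¹ * ((blockW p A) ^ k) (0, a) (j, b) =
      if (j : ℕ) ≤ k then ((k.factorial : ℂ))⁻¹ * (A ^ (k - (j : ℕ))) a b else 0 := by
    intro k
    rw [blockW_pow_apply, mul_ite, mul_zero]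
  rw [tsum_congr h1]
  rw [← Function.Injective.tsum_eq (g := fun m : ℕ => m + (j : ℕ)) (add_left_injective _) ?_]
  · refine tsum_congr fun m => ?_
    rw [if_pos (Nat.le_add_left _ _)]
    have hm : m + (j : ℕ) - (j : ℕ) = m := by omega
    rw [hm]
  · intro x hx
    simp only [Function.mem_support] at hx
    rcases le_or_gt (j : ℕ) x with h | h
    · exact ⟨x - (j : ℕ), Nat.sub_add_cancel h⟩
    · exact absurd (if_neg (by omega)) hx
end

section
/- Let A ∈ ℂ^{n×n}, let f be given by a power series f(z) = Σ_{k≥0} c_k z^k with radius of convergence exceeding the spectral radius of A, and let J = J_p(0) ⊗ I_n and E = e_1^T ⊗ I_n ∈ ℂ^{n×np}. Then the (1,2) block of f applied to W = [[A, E],[0, J]] equals [g_1(A), g_2(A), ..., g_p(A)] where g_i(A) = Σ_{k≥i} c_k A^{k−i}. -/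
open scoped NNReal
open Filter

lemma fin_sum_ite {p : ℕ} (cc : ℕ) (f : Fin (p + 1) → ℂ) :
    (∑ z : Fin (p + 1), if (z : ℕ) = cc then f z else 0) =
      if h : cc < p + 1 then f ⟨cc, h⟩ else 0 := by
  split
  case isTrue h =>
    rw [Finset.sum_eq_single (⟨cc, h⟩ : Fin (p + 1))]
    · simp
    · intro z _ hz
      rw [if_neg]
      simpa [Fin.ext_iff] using hz
    · simp
  case isFalse h =>
    apply Finset.sum_eq_zero
    intro z _
    rw [if_neg]
    exact fun hz => h (hz ▸ z.2)

lemma blockW_pow_ne_zero {n p : ℕ} (A : Matrix (Fin n) (Fin n) ℂ) (k : ℕ)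
    (i j : Fin (p + 1)) (a b : Fin n) (hi : i ≠ 0) :
    ((blockW p A) ^ k) (i, a) (j, b) =
      if (j : ℕ) = (i : ℕ) + k ∧ a = b then 1 else 0 := by
  induction k generalizing i a with
  | zero =>
    simp only [pow_zero, Matrix.one_apply, Prod.mk.injEq, Nat.add_zero]
    congr 1
    simp [Prod.ext_iff, Fin.ext_iff, eq_comm]
  | succ k ih =>
    rw [pow_succ', Matrix.mul_apply]
    rw [Fintype.sum_prod_type]
    have hW : ∀ (z1 : Fin (p + 1)) (z2 : Fin n),
        blockW p A (i, a) (z1, z2) =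
          if (z1 : ℕ) = (i : ℕ) + 1 then (if a = z2 then 1 else 0) else 0 := by
      intro z1 z2
      simp [blockW, hi]
    have : ∀ z1 : Fin (p + 1),
        (∑ z2 : Fin n, blockW p A (i, a) (z1, z2) * ((blockW p A) ^ k) (z1, z2) (j, b)) =
        if (z1 : ℕ) = (i : ℕ) + 1 then ((blockW p A) ^ k) (z1, a) (j, b) else 0 := by
      intro z1
      by_cases h1 : (z1 : ℕ) = (i : ℕ) + 1
      · simp only [hW, h1, if_true]
        rw [Finset.sum_eq_single a]
        · simp
        · intro z2 _ hz2; simp [Ne.symm hz2]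
        · simp
      · simp [hW, h1]
    rw [Finset.sum_congr rfl (fun z1 _ => this z1)]
    rw [fin_sum_ite]
    split
    case isTrue h =>
      have hz0 : (⟨(i : ℕ) + 1, h⟩ : Fin (p + 1)) ≠ 0 := by
        intro h0; have := congrArg Fin.val h0; simp at this
      rw [ih _ _ hz0]
      congr 2
      simp
      omega
    case isFalse h =>
      rw [if_neg]
      rintro ⟨hjv, -⟩
      have := j.2
      omega

lemma blockW_pow_zero {n p : ℕ} (A : Matrix (Fin n) (Fin n) ℂ) (k : ℕ)
    (j : Fin (p + 1)) (a b : Fin n) :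
    ((blockW p A) ^ k) (0, a) (j, b) =
      if (j : ℕ) ≤ k then (A ^ (k - (j : ℕ))) a b else 0 := by
  induction k generalizing a with
  | zero =>
    simp only [pow_zero, Matrix.one_apply, Prod.mk.injEq, Nat.le_zero]
    by_cases hj0 : j = 0
    · subst hj0; simp [Matrix.one_apply, eq_comm]
    · have : ¬((j : ℕ) = 0) := fun hv => hj0 (Fin.ext hv)
      simp only [this, if_false, and_false]
      rw [if_neg]
      rintro ⟨h, -⟩
      exact hj0 h.symm
  | succ k ih =>
    rw [pow_succ', Matrix.mul_apply, Fintype.sum_prod_type]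
    have key : ∀ z1 : Fin (p + 1),
        (∑ z2 : Fin n, blockW p A ((0 : Fin (p+1)), a) (z1, z2) *
            ((blockW p A) ^ k) (z1, z2) (j, b)) =
        (if z1 = 0 then (if (j : ℕ) ≤ k then (A ^ (k + 1 - (j : ℕ))) a b else 0) else 0) +
        (if (z1 : ℕ) = 1 then (if (j : ℕ) = k + 1 ∧ a = b then 1 else 0) else 0) := by
      intro z1
      by_cases h0 : z1 = 0
      · subst h0
        have hz : ((0 : Fin (p+1)) : ℕ) ≠ 1 := by simp
        rw [if_pos rfl, if_neg hz, add_zero]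
        have hblock : ∀ z2, blockW p A ((0 : Fin (p+1)), a) ((0 : Fin (p+1)), z2) = A a z2 := by
          intro z2; simp [blockW]
        by_cases hjk : (j : ℕ) ≤ k
        · rw [if_pos hjk]
          have : ∀ z2 : Fin n, blockW p A ((0 : Fin (p+1)), a) ((0 : Fin (p+1)), z2) *
              ((blockW p A) ^ k) ((0 : Fin (p+1)), z2) (j, b) = A a z2 * (A ^ (k - (j:ℕ))) z2 b := by
            intro z2; rw [hblock, ih, if_pos hjk]
          rw [Finset.sum_congr rfl (fun z2 _ => this z2)]
          have hpow : A ^ (k + 1 - (j : ℕ)) = A * A ^ (k - (j : ℕ)) := by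
            rw [show k + 1 - (j : ℕ) = (k - (j : ℕ)) + 1 by omega, pow_succ']
          rw [hpow, Matrix.mul_apply]
        · rw [if_neg hjk]
          apply Finset.sum_eq_zero
          intro z2 _
          rw [hblock, ih, if_neg hjk, mul_zero]
      · by_cases h1 : (z1 : ℕ) = 1
        · rw [if_neg h0, if_pos h1, zero_add]
          have hblock : ∀ z2, blockW p A ((0 : Fin (p+1)), a) (z1, z2) =
              if a = z2 then 1 else 0 := by
            intro z2; simp [blockW, h0, h1]
          rw [Finset.sum_congr rfl (fun z2 _ => by rw [hblock])]
          rw [Finset.sum_eq_single a (by intro z2 _ hz2; simp [Ne.symm hz2]) (by simp)]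
          rw [if_pos rfl, one_mul, blockW_pow_ne_zero _ _ _ _ _ _ h0, h1]
          congr 2
          simp [Nat.add_comm]
        · rw [if_neg h0, if_neg h1, zero_add]
          apply Finset.sum_eq_zero
          intro z2 _
          have : blockW p A ((0 : Fin (p+1)), a) (z1, z2) = 0 := by
            simp [blockW, h0, h1]
          rw [this, zero_mul]
    rw [Finset.sum_congr rfl (fun z1 _ => key z1), Finset.sum_add_distrib]
    rw [Finset.sum_ite_eq' Finset.univ (0 : Fin (p+1))
      (fun _ => if (j : ℕ) ≤ k then (A ^ (k + 1 - (j : ℕ))) a b else 0), if_pos (Finset.mem_univ _)]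
    rw [fin_sum_ite]
    by_cases hjk : (j : ℕ) ≤ k
    · have hne : ¬((j : ℕ) = k + 1) := by omega
      simp [hjk, hne, Nat.le_succ_of_le hjk]
    · by_cases hje : (j : ℕ) = k + 1
      · have hp : 1 < p + 1 := by have := j.2; omega
        rw [if_neg hjk, dif_pos hp, zero_add, if_pos (le_of_eq hje), hje]
        simp [Matrix.one_apply, hje]
      · have : ¬((j : ℕ) ≤ k + 1) := by omega
        simp [hjk, hje, this]

lemma entry_norm_le_clm_norm {n : ℕ} (M : Matrix (Fin n) (Fin n) ℂ) (a b : Fin n) :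
    ‖M a b‖ ≤ ‖Matrix.toEuclideanCLM (𝕜 := ℂ) M‖ := by
  set T := Matrix.toEuclideanCLM (𝕜 := ℂ) M
  set v : EuclideanSpace ℂ (Fin n) := T ((WithLp.equiv 2 _).symm (Pi.single b 1))
  have hva : v a = M a b := by
    show T ((WithLp.equiv 2 _).symm (Pi.single b 1)) a = M a b
    rw [WithLp.equiv_symm_apply, Matrix.toEuclideanCLM_toLp]
    simp [Matrix.toLin'_apply, Matrix.mulVec_single]
  have h1 : ‖v a‖ ≤ ‖v‖ := by
    have h2 : ‖v a‖ ^ 2 ≤ ∑ i, ‖v i‖ ^ 2 :=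
      Finset.single_le_sum (f := fun i => ‖v i‖ ^ 2)
        (fun i _ => sq_nonneg _) (Finset.mem_univ a)
    have h3 : ‖v‖ = Real.sqrt (∑ i, ‖v i‖ ^ 2) := by
      rw [EuclideanSpace.norm_eq]
    rw [h3]
    calc ‖v a‖ = Real.sqrt (‖v a‖ ^ 2) := by rw [Real.sqrt_sq (norm_nonneg _)]
    _ ≤ Real.sqrt (∑ i, ‖v i‖ ^ 2) := Real.sqrt_le_sqrt h2
  have h4 : ‖v‖ ≤ ‖T‖ := by
    calc ‖v‖ ≤ ‖T‖ * ‖(WithLp.equiv 2 (Fin n → ℂ)).symm (Pi.single b 1)‖ :=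
      T.le_opNorm _
    _ = ‖T‖ := by
      rw [show ((WithLp.equiv 2 (Fin n → ℂ)).symm (Pi.single b 1)) =
        EuclideanSpace.single b (1 : ℂ) from rfl, EuclideanSpace.norm_single, norm_one, mul_one]
  rw [← hva]
  exact h1.trans h4

lemma eventually_entry_bound {n : ℕ} (A : Matrix (Fin n) (Fin n) ℂ) (r : ℝ≥0)
    (hr : spectralRadius ℂ A < (r : ENNReal)) :
    ∀ᶠ k in atTop, ∀ a b : Fin n, ‖(A ^ k) a b‖ ≤ (r : ℝ) ^ k := by
  rcases Nat.eq_zero_or_pos n with h0 | hn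
  · filter_upwards with k a
    exact absurd a.2 (by omega)
  · haveI : Nonempty (Fin n) := ⟨⟨0, hn⟩⟩
    set T := Matrix.toEuclideanCLM (𝕜 := ℂ) A with hT
    have hspec : spectralRadius ℂ T = spectralRadius ℂ A := by
      unfold spectralRadius
      rw [AlgEquiv.spectrum_eq (Matrix.toEuclideanCLM (𝕜 := ℂ)) A]
    have htend := spectrum.pow_nnnorm_pow_one_div_tendsto_nhds_spectralRadius T
    rw [hspec] at htend
    have hev : ∀ᶠ k : ℕ in atTop, ((‖T ^ k‖₊ : ENNReal) ^ (1 / (k:ℝ))) < (r : ENNReal) :=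
      htend.eventually_lt_const hr
    filter_upwards [hev, eventually_ge_atTop 1] with k hk hk1 a b
    have hkR : (0 : ℝ) < (k : ℝ) := by positivity
    have h2 : (‖T ^ k‖₊ : ENNReal) < (r : ENNReal) ^ (k : ℝ) := by
      have h3 := ENNReal.rpow_lt_rpow hk hkR
      rwa [← ENNReal.rpow_mul, one_div, inv_mul_cancel₀ (by positivity : (k:ℝ) ≠ 0),
        ENNReal.rpow_one] at h3
    have h4 : ‖T ^ k‖ ≤ (r : ℝ) ^ k := by
      rw [ENNReal.rpow_natCast, ← ENNReal.coe_pow, ENNReal.coe_lt_coe] at h2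
      have := h2.le
      calc ‖T ^ k‖ = ((‖T ^ k‖₊ : ℝ≥0) : ℝ) := rfl
      _ ≤ ((r ^ k : ℝ≥0) : ℝ) := by exact_mod_cast this
      _ = (r : ℝ) ^ k := by push_cast; ring
    calc ‖(A ^ k) a b‖ ≤ ‖Matrix.toEuclideanCLM (𝕜 := ℂ) (A ^ k)‖ :=
      entry_norm_le_clm_norm _ a b
    _ = ‖T ^ k‖ := by rw [map_pow]
    _ ≤ (r : ℝ) ^ k := h4

lemma summable_entry_shift {n : ℕ} (A : Matrix (Fin n) (Fin n) ℂ) (c : ℕ → ℂ)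
    (r : ℝ≥0) (hr : spectralRadius ℂ A < (r : ENNReal))
    (hsum : Summable fun k : ℕ => ‖c k‖ * (r : ℝ) ^ k)
    (m : ℕ) (a b : Fin n) :
    Summable (fun k : ℕ => c (k + m) * (A ^ k) a b) := by
  have hr0 : (0 : ℝ) < (r : ℝ) := by
    have : (0 : ENNReal) < (r : ENNReal) := lt_of_le_of_lt zero_le hr
    exact_mod_cast this
  apply Summable.of_norm_bounded_eventually_nat
    (g := fun k => ((r : ℝ)⁻¹) ^ m * (‖c (k + m)‖ * (r : ℝ) ^ (k + m)))
  · exact (((summable_nat_add_iff m).2 hsum)).mul_left _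
  · filter_upwards [eventually_entry_bound A r hr] with k hk
    calc ‖c (k + m) * (A ^ k) a b‖ = ‖c (k + m)‖ * ‖(A ^ k) a b‖ := norm_mul _ _
    _ ≤ ‖c (k + m)‖ * (r : ℝ) ^ k := by
      exact mul_le_mul_of_nonneg_left (hk a b) (norm_nonneg _)
    _ = ((r : ℝ)⁻¹) ^ m * (‖c (k + m)‖ * (r : ℝ) ^ (k + m)) := by
      rw [pow_add]
      field_simp
      rw [mul_assoc, ← mul_pow, one_div_mul_cancel hr0.ne', one_pow, mul_one]

/-- Let `f(z) = ∑_{k≥0} c_k z^k` have radius of convergence exceeding the spectral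
radius of `A`. Then the `(1,2)` block of `f(W)`, `W = [[A, E],[0, J]]`, equals
`[g_1(A), g_2(A), …, g_p(A)]` where `g_i(A) = ∑_{k≥i} c_k A^{k−i}`. -/
theorem blockW_offdiagonal_blocks {n : ℕ} (p : ℕ) (A : Matrix (Fin n) (Fin n) ℂ)
    (c : ℕ → ℂ)
    (hradius : ∃ r : ℝ≥0, spectralRadius ℂ A < (r : ENNReal) ∧
      Summable fun k : ℕ => ‖c k‖ * (r : ℝ) ^ k)
    (j : Fin (p + 1)) (hj : j ≠ 0) (a b : Fin n) :
    (∑' k : ℕ, c k • (blockW p A) ^ k) (0, a) (j, b) =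
      (∑' k : ℕ, c (k + (j : ℕ)) • A ^ k) a b := by
  obtain ⟨r, hr, hsum⟩ := hradius
  -- summability of the right-hand side matrix series
  have hRsum : Summable (fun k : ℕ => c (k + (j : ℕ)) • A ^ k) := by
    refine Pi.summable.mpr fun a' => Pi.summable.mpr fun b' => ?_
    simpa [smul_eq_mul] using summable_entry_shift A c r hr hsum (j : ℕ) a' b'
  -- summability of the left-hand side matrix series
  have hLsum : Summable (fun k : ℕ => c k • (blockW p A) ^ k) := by
    refine Pi.summable.mpr fun x => Pi.summable.mpr fun y => ?_
    obtain ⟨i, a'⟩ := x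
    obtain ⟨j', b'⟩ := y
    by_cases hi : i = 0
    · subst hi
      have hfun : (fun k => (c k • (blockW p A) ^ k) (0, a') (j', b')) =
          fun k => if (j' : ℕ) ≤ k then c k * (A ^ (k - (j' : ℕ))) a' b' else 0 := by
        funext k
        rw [Matrix.smul_apply, blockW_pow_zero, smul_eq_mul, mul_ite, mul_zero]
      rw [hfun, ← summable_nat_add_iff (j' : ℕ)]
      have : (fun k => if (j' : ℕ) ≤ k + (j' : ℕ) then
          c (k + (j' : ℕ)) * (A ^ (k + (j' : ℕ) - (j' : ℕ))) a' b' else 0) =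
          fun k => c (k + (j' : ℕ)) * (A ^ k) a' b' := by
        funext k
        rw [if_pos (Nat.le_add_left _ _), Nat.add_sub_cancel]
      rw [this]
      exact summable_entry_shift A c r hr hsum (j' : ℕ) a' b'
    · apply summable_of_ne_finset_zero (s := Finset.range ((j' : ℕ) + 1))
      intro k hk
      rw [Finset.mem_range] at hk
      rw [Matrix.smul_apply, blockW_pow_ne_zero _ _ _ _ _ _ hi, if_neg, smul_zero]
      rintro ⟨hv, -⟩
      omega
  -- evaluate entrywise
  erw [tsum_apply hLsum, tsum_apply (Pi.summable.mp hLsum _),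
    tsum_apply hRsum, tsum_apply (Pi.summable.mp hRsum _)]
  have hL : (fun k => (c k • (blockW p A) ^ k) (0, a) (j, b)) =
      fun k => if (j : ℕ) ≤ k then c k * (A ^ (k - (j : ℕ))) a b else 0 := by
    funext k
    rw [Matrix.smul_apply, blockW_pow_zero, smul_eq_mul, mul_ite, mul_zero]
  rw [show (∑' k, (c k • (blockW p A) ^ k) (0, a) (j, b)) =
      ∑' k, (if (j : ℕ) ≤ k then c k * (A ^ (k - (j : ℕ))) a b else 0) by rw [hL]]
  have hinj : Function.Injective (fun k : ℕ => k + (j : ℕ)) :=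
    fun x y h => by simpa using h
  have hresh := Function.Injective.tsum_eq hinj
    (f := fun x => if (j : ℕ) ≤ x then c x * (A ^ (x - (j : ℕ))) a b else 0) ?_
  · rw [← hresh]
    apply tsum_congr
    intro k
    simp only [if_pos (Nat.le_add_left _ _), Nat.add_sub_cancel, Matrix.smul_apply, smul_eq_mul]
  · intro x hx
    rcases le_or_gt (j : ℕ) x with h | h
    · refine ⟨x - (j : ℕ), ?_⟩
      show x - (j : ℕ) + (j : ℕ) = x
      omega
    · exfalso
      apply hx
      simp [Function.support, Nat.not_le.mpr h]
end

section
/- Let h be an analytic function on a neighborhood of 0 with h(z) = Σ_{k≥K} c_k z^k for some K ≥ 1, and define h̃(θ) = Σ_{k≥K} |c_k| θ^k. Then for any n×n complex matrix X and any r ≥ 1 with K ≥ r(r−1), ‖h(X)‖ ≤ h̃(α_r(X)) where α_r(X) = max(‖X^r‖^{1/r}, ‖X^{r+1}‖^{1/(r+1)}) and ‖·‖ is any submultiplicative matrix norm, provided α_r(X) is within the radius of convergence of h̃. -/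
attribute [local instance] Matrix.linftyOpNormedAddCommGroup Matrix.linftyOpNormedRing
attribute [local instance] Matrix.linftyOpNormedAlgebra

/-- `α_r(X) = max(‖X^r‖^{1/r}, ‖X^{r+1}‖^{1/(r+1)})` (for the `ℓ∞` operator norm,
a submultiplicative matrix norm). -/
noncomputable def alphaR {n : ℕ} (X : Matrix (Fin n) (Fin n) ℂ) (r : ℕ) : ℝ :=
  max (‖X ^ r‖ ^ ((r : ℝ))⁻¹) (‖X ^ (r + 1)‖ ^ (((r : ℝ) + 1))⁻¹)

/-- Numerical semigroup fact: every `k ≥ r(r-1)` is a combination `a*r + b*(r+1)`. -/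
lemma exists_rep (r k : ℕ) (hr : 1 ≤ r) (hk : r * (r - 1) ≤ k) :
    ∃ a b : ℕ, k = a * r + b * (r + 1) := by
  obtain ⟨m, rfl⟩ := Nat.exists_eq_add_of_le hk
  obtain ⟨q, s, hs, rfl⟩ : ∃ q s, s < r ∧ m = r * q + s :=
    ⟨m / r, m % r, Nat.mod_lt _ hr, (Nat.div_add_mod m r).symm⟩
  refine ⟨r - 1 + q - s, s, ?_⟩
  have h1 : s ≤ r - 1 + q := by omega
  zify [h1, hr]
  ring

/-- Let `h(z) = ∑_{k≥K} c_k z^k` (`K ≥ 1`) and `h̃(θ) = ∑_{k≥K} |c_k| θ^k`.  For any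
`n×n` complex matrix `X` and any `r ≥ 1` with `K ≥ r(r−1)`, provided `α_r(X)` lies
within the radius of convergence of `h̃`, one has `‖h(X)‖ ≤ h̃(α_r(X))`. -/
theorem norm_h_le_htilde_alpha {n : ℕ} (c : ℕ → ℂ) (K r : ℕ)
    (hK : 1 ≤ K) (hr : 1 ≤ r) (hc : ∀ k, k < K → c k = 0) (hKr : r * (r - 1) ≤ K)
    (X : Matrix (Fin n) (Fin n) ℂ)
    (hradius : ∃ t : ℝ, alphaR X r < t ∧ Summable fun k : ℕ => ‖c k‖ * t ^ k) :
    ‖∑' k : ℕ, c k • X ^ k‖ ≤ ∑' k : ℕ, ‖c k‖ * (alphaR X r) ^ k := by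
  set α := alphaR X r with hα_def
  have hα0 : 0 ≤ α := le_trans (Real.rpow_nonneg (norm_nonneg _) _) (le_max_left _ _)
  have hXr : ‖X ^ r‖ ≤ α ^ r := by
    calc ‖X ^ r‖ = (‖X ^ r‖ ^ ((r : ℝ))⁻¹) ^ r :=
          (Real.rpow_inv_natCast_pow (norm_nonneg _) (by omega)).symm
      _ ≤ α ^ r := pow_le_pow_left₀ (Real.rpow_nonneg (norm_nonneg _) _) (le_max_left _ _) r
  have hXr1 : ‖X ^ (r + 1)‖ ≤ α ^ (r + 1) := by
    calc ‖X ^ (r + 1)‖ = (‖X ^ (r + 1)‖ ^ (((r : ℕ) + 1 : ℝ))⁻¹) ^ (r + 1) :=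
          (by rw [show (((r : ℕ) + 1 : ℝ)) = ((r + 1 : ℕ) : ℝ) by push_cast; ring]
              exact (Real.rpow_inv_natCast_pow (norm_nonneg _) (by omega)).symm)
      _ ≤ α ^ (r + 1) := by
          apply pow_le_pow_left₀ (Real.rpow_nonneg (norm_nonneg _) _)
          exact le_max_right _ _
  -- key pointwise bound
  have hpow : ∀ k, K ≤ k → ‖X ^ k‖ ≤ α ^ k := by
    intro k hk
    obtain ⟨a, b, rfl⟩ := exists_rep r k hr (le_trans hKr hk)
    have hXra : ∀ m : ℕ, ‖(X ^ r) ^ m‖ ≤ (α ^ r) ^ m ∨ m = 0 := by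
      intro m
      rcases Nat.eq_zero_or_pos m with h | h
      · right; exact h
      · left; exact le_trans (norm_pow_le' _ h)
          (pow_le_pow_left₀ (norm_nonneg _) hXr m)
    have hXrb : ∀ m : ℕ, ‖(X ^ (r + 1)) ^ m‖ ≤ (α ^ (r + 1)) ^ m ∨ m = 0 := by
      intro m
      rcases Nat.eq_zero_or_pos m with h | h
      · right; exact h
      · left; exact le_trans (norm_pow_le' _ h)
          (pow_le_pow_left₀ (norm_nonneg _) hXr1 m)
    have hk1 : 1 ≤ a * r + b * (r + 1) := le_trans hK hk
    have hsplit : X ^ (a * r + b * (r + 1)) = (X ^ r) ^ a * (X ^ (r + 1)) ^ b := by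
      rw [pow_add, ← pow_mul, ← pow_mul, Nat.mul_comm a r, Nat.mul_comm b (r + 1)]
    have hαsplit : α ^ (a * r + b * (r + 1)) = (α ^ r) ^ a * (α ^ (r + 1)) ^ b := by
      rw [pow_add, ← pow_mul, ← pow_mul, Nat.mul_comm a r, Nat.mul_comm b (r + 1)]
    rw [hsplit, hαsplit]
    rcases hXra a with ha | ha
    · rcases hXrb b with hb | hb
      · exact le_trans (norm_mul_le _ _)
          (mul_le_mul ha hb (norm_nonneg _) (pow_nonneg (pow_nonneg hα0 _) _))
      · subst hb; simpa using ha
    · subst ha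
      rcases hXrb b with hb | hb
      · simpa using hb
      · subst hb; simp at hk1
  have hbound : ∀ k, ‖c k • X ^ k‖ ≤ ‖c k‖ * α ^ k := by
    intro k
    rcases lt_or_ge k K with h | h
    · simp [hc k h, mul_nonneg (norm_nonneg _) (pow_nonneg hα0 _)]
    · exact le_trans (norm_smul_le _ _)
        (mul_le_mul_of_nonneg_left (hpow k h) (norm_nonneg _))
  obtain ⟨t, hαt, ht⟩ := hradius
  have hsum : Summable fun k : ℕ => ‖c k‖ * α ^ k := by
    refine ht.of_nonneg_of_le
      (fun k => mul_nonneg (norm_nonneg _) (pow_nonneg hα0 _)) (fun k => ?_)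
    exact mul_le_mul_of_nonneg_left (pow_le_pow_left₀ hα0 hαt.le k) (norm_nonneg _)
  have hsumnorm : Summable fun k : ℕ => ‖c k • X ^ k‖ :=
    hsum.of_nonneg_of_le (fun k => norm_nonneg _) hbound
  calc ‖∑' k : ℕ, c k • X ^ k‖ ≤ ∑' k : ℕ, ‖c k • X ^ k‖ :=
        norm_tsum_le_tsum_norm hsumnorm
    _ ≤ ∑' k : ℕ, ‖c k‖ * α ^ k := Summable.tsum_le_tsum hbound hsumnorm hsum
end

section
/- For a positive integer m and τ with 1 ≤ τ ≤ m, define π_m(τ) = τ − 1 + 2(⌊m/τ⌋ − δ), where δ = 1 if τ divides m and δ = 0 otherwise. Then min over 1 ≤ τ ≤ m of π_m(τ) is attained at τ = ⌊√(2m)⌋ or τ = ⌈√(2m)⌉. -/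
/-- Paterson–Stockmeyer cost `π_m(τ) = τ − 1 + 2(⌊m/τ⌋ − δ_{m,τ})`, where
`δ_{m,τ} = 1` if `τ ∣ m` and `0` otherwise. -/
def psCost (m τ : ℕ) : ℕ :=
  τ - 1 + 2 * (m / τ - if τ ∣ m then 1 else 0)

/-- Ceiling of the square root of a natural number. -/
def ceilSqrt (n : ℕ) : ℕ :=
  if (Nat.sqrt n) ^ 2 = n then Nat.sqrt n else Nat.sqrt n + 1

namespace PSAux

/-- Ceiling division, written explicitly. -/
def C (m τ : ℕ) : ℕ := m / τ + if τ ∣ m then 0 else 1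

lemma le_mul_C (m τ : ℕ) (hτ : 1 ≤ τ) : m ≤ τ * C m τ := by
  unfold C
  by_cases h : τ ∣ m
  · simp [h, Nat.mul_div_cancel' h]
  · simp only [h, if_false]
    have h1 := Nat.div_add_mod m τ
    have h2 : m % τ < τ := Nat.mod_lt _ hτ
    have h3 : τ * (m / τ + 1) = τ * (m / τ) + τ := by ring
    omega

lemma C_le (m τ k : ℕ) (hτ : 1 ≤ τ) (h : m ≤ k * τ) : C m τ ≤ k := by
  unfold C
  by_cases hd : τ ∣ m
  · simp only [hd, if_true, add_zero]
    calc m / τ ≤ (k * τ) / τ := Nat.div_le_div_right h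
    _ = k := Nat.mul_div_cancel k hτ
  · simp only [hd, if_false]
    have h1 := Nat.div_add_mod m τ
    have h2 : m % τ ≠ 0 := fun hc => hd (Nat.dvd_of_mod_eq_zero hc)
    have h3 : m / τ < k := by
      by_contra hc
      push_neg at hc
      have : k * τ ≤ m / τ * τ := Nat.mul_le_mul_right τ hc
      have h4 : m / τ * τ = τ * (m / τ) := by ring
      omega
    omega

lemma psCost_add_three (m τ : ℕ) (hτ : 1 ≤ τ) (hτm : τ ≤ m) :
    psCost m τ + 3 = τ + 2 * C m τ := by
  have hd : 1 ≤ m / τ := (Nat.one_le_div_iff hτ).mpr hτm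
  unfold psCost C
  by_cases h : τ ∣ m <;> simp only [h, if_true, if_false] <;> omega

lemma lower (m σ : ℕ) (hσ : 1 ≤ σ) : 8 * m ≤ (σ + 2 * C m σ) ^ 2 := by
  have h := le_mul_C m σ hσ
  zify at h ⊢
  nlinarith [sq_nonneg ((σ : ℤ) - 2 * C m σ), sq_nonneg ((σ : ℤ) + 2 * C m σ),
    h, sq_nonneg ((σ : ℤ) * σ - 2 * m)]

lemma key (m τ k : ℕ) (hτ1 : 1 ≤ τ) (hτm : τ ≤ m)
    (hk : m ≤ k * τ) (hlt : (τ + 2 * k) ^ 2 + 2 ≤ 8 * m + 2 * (τ + 2 * k)) :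
    ∀ σ ∈ Finset.Icc 1 m, psCost m τ ≤ psCost m σ := by
  intro σ hσ
  rw [Finset.mem_Icc] at hσ
  obtain ⟨hσ1, hσm⟩ := hσ
  have hC : C m τ ≤ k := C_le m τ k hτ1 hk
  have hx := psCost_add_three m τ hτ1 hτm
  have hy := psCost_add_three m σ hσ1 hσm
  have l8 := lower m σ hσ1
  have hzy : τ + 2 * k ≤ σ + 2 * C m σ := by
    by_contra hc
    push_neg at hc
    zify at hc hlt l8
    nlinarith [hc, hlt, l8]
  omega

end PSAux

open PSAux in
/-- The minimum of `π_m(τ)` over `1 ≤ τ ≤ m` is attained at `τ = ⌊√(2m)⌋` or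
`τ = ⌈√(2m)⌉`. -/
theorem psCost_min_at_sqrt (m : ℕ) (hm : 1 ≤ m) :
    ∃ τ : ℕ, (τ = Nat.sqrt (2 * m) ∨ τ = ceilSqrt (2 * m)) ∧
      τ ∈ Finset.Icc 1 m ∧
      ∀ σ ∈ Finset.Icc 1 m, psCost m τ ≤ psCost m σ := by
  set r := Nat.sqrt (2 * m) with hrdef
  have hr1 : r * r ≤ 2 * m := by
    have := Nat.sqrt_le' (2 * m)
    rw [pow_two] at this
    exact this
  have hr2 : 2 * m < (r + 1) * (r + 1) := by
    have := Nat.lt_succ_sqrt' (2 * m)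
    rw [Nat.succ_eq_add_one, pow_two] at this
    exact this
  have hr0 : 1 ≤ r := by
    rcases Nat.eq_zero_or_pos r with h | h
    · rw [h] at hr2; omega
    · exact h
  have hrm : r ≤ m := by nlinarith
  have hcs : r * r ≠ 2 * m → ceilSqrt (2 * m) = r + 1 := by
    intro h
    unfold ceilSqrt
    rw [if_neg]
    rw [← hrdef, pow_two]
    exact h
  rcases Nat.even_or_odd r with ⟨q, hq⟩ | ⟨q, hq⟩
  · -- r even, r = q + q
    have hq1 : 1 ≤ q := by omega
    by_cases he : 2 * m ≤ r * r + r
    · by_cases h0 : 2 * m = r * r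
      · -- τ = r, k = q
        refine ⟨r, Or.inl rfl, Finset.mem_Icc.mpr ⟨hr0, hrm⟩, key m r q hr0 hrm ?_ ?_⟩
        · have : r * r = 2 * (q * r) := by rw [hq]; ring
          omega
        · have h4 : r + 2 * q = 2 * r := by omega
          rw [h4]
          nlinarith
      · -- τ = r + 1 = ceilSqrt, k = q
        have hne : r * r ≠ 2 * m := fun hc => h0 hc.symm
        have hlt : r * r < 2 * m := lt_of_le_of_ne hr1 hne
        have hr2' : 2 ≤ r := by omega
        have hc1m : r + 1 ≤ m := by nlinarith
        refine ⟨r + 1, Or.inr (hcs hne).symm,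
          Finset.mem_Icc.mpr ⟨by omega, hc1m⟩, key m (r + 1) q (by omega) hc1m ?_ ?_⟩
        · have : r * r + r = 2 * (q * (r + 1)) := by rw [hq]; ring
          omega
        · have h4 : r + 1 + 2 * q = 2 * r + 1 := by omega
          rw [h4]
          nlinarith
    · -- e ≥ r + 1; τ = r, k = q + 1
      push_neg at he
      refine ⟨r, Or.inl rfl, Finset.mem_Icc.mpr ⟨hr0, hrm⟩, key m r (q + 1) hr0 hrm ?_ ?_⟩
      · have : r * r + 2 * r = 2 * ((q + 1) * r) := by rw [hq]; ring
        have h5 : (r + 1) * (r + 1) = r * r + 2 * r + 1 := by ring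
        omega
      · have h4 : r + 2 * (q + 1) = 2 * r + 2 := by omega
        rw [h4]
        nlinarith
  · -- r odd, r = 2 * q + 1
    have hodd : r * r = 2 * (2 * q * q + 2 * q) + 1 := by rw [hq]; ring
    have hne : r * r ≠ 2 * m := by omega
    by_cases he : 2 * m ≤ r * r + r
    · -- τ = r, k = q + 1
      refine ⟨r, Or.inl rfl, Finset.mem_Icc.mpr ⟨hr0, hrm⟩, key m r (q + 1) hr0 hrm ?_ ?_⟩
      · have : r * r + r = 2 * ((q + 1) * r) := by rw [hq]; ring
        omega
      · have h4 : r + 2 * (q + 1) = 2 * r + 1 := by omega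
        rw [h4]
        have : r * r + 1 ≤ 2 * m := by omega
        nlinarith
    · -- τ = r + 1 = ceilSqrt, k = q + 1
      push_neg at he
      have hc1m : r + 1 ≤ m := by nlinarith
      refine ⟨r + 1, Or.inr (hcs hne).symm,
        Finset.mem_Icc.mpr ⟨by omega, hc1m⟩, key m (r + 1) (q + 1) (by omega) hc1m ?_ ?_⟩
      · have : (r + 1) * (r + 1) = 2 * ((q + 1) * (r + 1)) := by rw [hq]; ring
        omega
      · have h4 : r + 1 + 2 * (q + 1) = 2 * r + 2 := by omega
        rw [h4]
        nlinarith
end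

section
/- Define m_i = ⌊(i+3)²/8⌋ for i ≥ 0, and π_m(τ*) as the minimal Paterson–Stockmeyer cost for degree m. Then for every i ≥ 0, ⌈√(8(m_i + 1)) − 3⌉ = i + 1. -/
/-- Optimal Paterson–Stockmeyer degrees `m_i = ⌊(i+3)²/8⌋`. -/
def psDegree (i : ℕ) : ℕ := (i + 3) ^ 2 / 8

/-- For every `i ≥ 0`, `⌈√(8(m_i + 1)) − 3⌉ = i + 1`. -/
theorem psDegree_inverse (i : ℕ) :
    ⌈Real.sqrt (8 * (psDegree i + 1)) - 3⌉ = (i : ℤ) + 1 := by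
  have hlow : (i + 3) ^ 2 < 8 * (psDegree i + 1) := by
    have := Nat.lt_div_mul_add (a := (i + 3) ^ 2) (b := 8) (by norm_num)
    unfold psDegree
    omega
  have hup : 8 * (psDegree i + 1) ≤ (i + 4) ^ 2 := by
    have h1 : psDegree i * 8 ≤ (i + 3) ^ 2 := Nat.div_mul_le_self _ _
    rcases Nat.eq_zero_or_pos i with h | h
    · subst h; norm_num [psDegree]
    · nlinarith
  have hlowR : ((i : ℝ) + 3) < Real.sqrt (8 * (psDegree i + 1)) := by
    rw [show (8 : ℝ) * (psDegree i + 1) = ((8 * (psDegree i + 1) : ℕ) : ℝ) by push_cast; ring,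
      Real.lt_sqrt (by positivity)]
    calc ((i : ℝ) + 3) ^ 2 = (((i + 3) ^ 2 : ℕ) : ℝ) := by push_cast; ring
    _ < _ := by exact_mod_cast hlow
  have hupR : Real.sqrt (8 * (psDegree i + 1)) ≤ (i : ℝ) + 4 := by
    rw [show ((i : ℝ) + 4) = Real.sqrt (((i : ℝ) + 4) ^ 2) by
      rw [Real.sqrt_sq (by positivity)]]
    apply Real.sqrt_le_sqrt
    calc (8 : ℝ) * (psDegree i + 1) = ((8 * (psDegree i + 1) : ℕ) : ℝ) := by push_cast; ring
    _ ≤ (((i + 4) ^ 2 : ℕ) : ℝ) := by exact_mod_cast hup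
    _ = _ := by push_cast; ring
  rw [Int.ceil_eq_iff]
  constructor <;> push_cast <;> linarith
end

section
/- Let X be an n×n complex matrix such that ρ(e^{−X} R(X) − I) < 1, where R is the [m+p/m] Padé approximant to e^z and ρ is the spectral radius, and suppose ρ(X) is less than the smallest modulus of a zero of the denominator of R. Then with h(X) = log(e^{−X} R(X)) (principal matrix logarithm), one has R(X) = e^{X + h(X)}, and X commutes with h(X). -/
open Filter Topology Asymptotics

/-- The matrix rational function `R(X) = N(X) D(X)⁻¹`. -/
noncomputable def padeEvalMat {n : ℕ} (N D : Polynomial ℂ)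
    (X : Matrix (Fin n) (Fin n) ℂ) : Matrix (Fin n) (Fin n) ℂ :=
  Polynomial.aeval X N * (Polynomial.aeval X D)⁻¹

/-- The principal matrix logarithm of `M`, defined by its power series
`log M = ∑_{k≥1} (−1)^{k+1} (M − I)^k / k` (valid when `ρ(M − I) < 1`). -/
noncomputable def principalLog {n : ℕ} (M : Matrix (Fin n) (Fin n) ℂ) :
    Matrix (Fin n) (Fin n) ℂ :=
  ∑' k : ℕ, ((-1 : ℂ) ^ k / (k + 1)) • (M - 1) ^ (k + 1)

section Aux

open NormedSpace

lemma commute_tsum_aux {R : Type*} [NormedRing R] [CompleteSpace R] (x : R) {f : ℕ → R}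
    (hf : Summable f) (h : ∀ k, Commute x (f k)) : Commute x (∑' k, f k) := by
  unfold Commute SemiconjBy
  rw [← hf.tsum_mul_left x, ← hf.tsum_mul_right x]
  exact tsum_congr fun k => (h k).eq

lemma commute_aeval_aux {A : Type*} [Ring A] [Algebra ℂ A] (x : A) (p : Polynomial ℂ) :
    Commute x (Polynomial.aeval x p) := by
  induction p using Polynomial.induction_on' with
  | add p q hp hq => rw [map_add]; exact hp.add_right hq
  | monomial k c =>
      rw [Polynomial.aeval_monomial]
      exact (Algebra.commute_algebraMap_right c x).mul_right ((Commute.refl x).pow_right k)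

variable {n : ℕ}

attribute [local instance] Matrix.linftyOpSemiNormedRing Matrix.linftyOpNormedRing
  Matrix.linftyOpNormedAlgebra

lemma geom_bound_aux (A : Matrix (Fin n) (Fin n) ℂ)
    (h : ∀ μ ∈ spectrum ℂ A, ‖μ‖ < 1) :
    ∃ C r : ℝ, 0 < C ∧ 0 < r ∧ r < 1 ∧ ∀ k, ‖A ^ k‖ ≤ C * r ^ k := by
  rcases Nat.eq_zero_or_pos n with hn | hn
  · refine ⟨1, 1/2, one_pos, by norm_num, by norm_num, fun k => ?_⟩
    subst hn
    have : Subsingleton (Matrix (Fin 0) (Fin 0) ℂ) :=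
      ⟨fun a b => by ext i; exact i.elim0⟩
    rw [Subsingleton.elim (A ^ k) 0, norm_zero]
    positivity
  have : Nonempty (Fin n) := ⟨⟨0, hn⟩⟩
  have hrad : spectralRadius ℂ A < 1 := by
    have := spectrum.spectralRadius_lt_of_forall_lt A (r := 1)
      (fun z hz => by simpa [← coe_nnnorm] using h z hz)
    simpa using this
  obtain ⟨r', hr1', hr2'⟩ := ENNReal.lt_iff_exists_nnreal_btwn.mp hrad
  have hr'1 : (r' : ℝ) < 1 := by exact_mod_cast hr2'
  have hgel := spectrum.pow_nnnorm_pow_one_div_tendsto_nhds_spectralRadius A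
  have hev : ∀ᶠ k : ℕ in atTop, (‖A ^ k‖₊ : ENNReal) ^ (1 / k : ℝ) < (r' : ENNReal) :=
    hgel.eventually_lt_const hr1'
  obtain ⟨K, hK⟩ := hev.exists_forall_of_atTop
  set r : ℝ := max (r' : ℝ) (1/2) with hrdef
  have hr0 : 0 < r := lt_of_lt_of_le (by norm_num) (le_max_right _ _)
  have hr1 : r < 1 := max_lt hr'1 (by norm_num)
  have hbig : ∀ k, K ≤ k → 1 ≤ k → ‖A ^ k‖ ≤ r ^ k := by
    intro k hKk h1k
    have hk := hK k hKk
    have : ((‖A ^ k‖₊ : ENNReal) ^ (1 / k : ℝ)) ^ (k : ℝ) ≤ (r' : ENNReal) ^ (k : ℝ) :=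
      ENNReal.rpow_le_rpow hk.le (by positivity)
    rw [← ENNReal.rpow_mul, one_div,
      inv_mul_cancel₀ (by exact_mod_cast Nat.one_le_iff_ne_zero.mp h1k : (k:ℝ) ≠ 0),
      ENNReal.rpow_one, ENNReal.rpow_natCast] at this
    have : ‖A ^ k‖₊ ≤ r' ^ k := by exact_mod_cast this
    calc ‖A ^ k‖ ≤ (r' : ℝ) ^ k := by exact_mod_cast this
    _ ≤ r ^ k := pow_le_pow_left₀ (by positivity) (le_max_left _ _) k
  set C : ℝ := 1 + ∑ j ∈ Finset.range (max K 1), ‖A ^ j‖ / r ^ j with hCdef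
  have hC1 : 1 ≤ C := by
    have : 0 ≤ ∑ j ∈ Finset.range (max K 1), ‖A ^ j‖ / r ^ j :=
      Finset.sum_nonneg fun j _ => by positivity
    simp [hCdef]; linarith
  refine ⟨C, r, by linarith, hr0, hr1, fun k => ?_⟩
  rcases lt_or_ge k (max K 1) with hk | hk
  · have hmem : k ∈ Finset.range (max K 1) := Finset.mem_range.mpr hk
    have hle : ‖A ^ k‖ / r ^ k ≤ ∑ j ∈ Finset.range (max K 1), ‖A ^ j‖ / r ^ j :=
      Finset.single_le_sum (f := fun j => ‖A ^ j‖ / r ^ j) (fun j _ => by positivity) hmem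
    have : ‖A ^ k‖ / r ^ k ≤ C := by simp only [hCdef]; linarith
    calc ‖A ^ k‖ = ‖A ^ k‖ / r ^ k * r ^ k := by field_simp
    _ ≤ C * r ^ k := by
        apply mul_le_mul_of_nonneg_right this (by positivity)
  · have := hbig k (le_trans (le_max_left _ _) hk) (le_trans (le_max_right _ _) hk)
    calc ‖A ^ k‖ ≤ r ^ k := this
    _ ≤ C * r ^ k := by nlinarith [pow_pos hr0 k]

/-- The series defining the principal logarithm is summable. -/
lemma principalLog_summable_aux (A : Matrix (Fin n) (Fin n) ℂ)
    (h : ∀ μ ∈ spectrum ℂ A, ‖μ‖ < 1) :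
    Summable (fun k : ℕ => ((-1 : ℂ) ^ k / (k + 1)) • A ^ (k + 1)) := by
  obtain ⟨C, r, hC, hr0, hr1, hb⟩ := geom_bound_aux A h
  apply Summable.of_norm_bounded (g := fun k => (C * r) * r ^ k)
    ((summable_geometric_of_lt_one hr0.le hr1).mul_left _)
  intro k
  rw [norm_smul]
  have h1 : ‖(-1 : ℂ) ^ k / ((k : ℂ) + 1)‖ ≤ 1 := by
    rw [norm_div, norm_pow, norm_neg, norm_one, one_pow]
    have : (1 : ℝ) ≤ ‖(k : ℂ) + 1‖ := by
      have h2 : ((k : ℂ) + 1) = ((k + 1 : ℕ) : ℂ) := by push_cast; ring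
      rw [h2, Complex.norm_natCast]
      exact_mod_cast Nat.one_le_iff_ne_zero.mpr (Nat.succ_ne_zero k)
    rw [div_le_one (by linarith)]; linarith
  calc ‖(-1 : ℂ) ^ k / ((k:ℂ) + 1)‖ * ‖A ^ (k + 1)‖ ≤ 1 * (C * r ^ (k+1)) :=
        mul_le_mul h1 (hb (k+1)) (norm_nonneg _) (by norm_num)
  _ = C * r * r ^ k := by ring

/-- Main analytic lemma: `exp (log (1 + A)) = 1 + A` when the spectral radius of `A`
is less than one. -/
lemma exp_log_aux (A : Matrix (Fin n) (Fin n) ℂ)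
    (h : ∀ μ ∈ spectrum ℂ A, ‖μ‖ < 1) :
    exp (∑' k : ℕ, ((-1 : ℂ) ^ k / (k + 1)) • A ^ (k + 1)) = 1 + A := by
  obtain ⟨C, r, hC, hr0, hr1, hb⟩ := geom_bound_aux A h
  set T : ℝ := (1 + 1/r) / 2 with hTdef
  have h1r : 1 < 1/r := by rw [lt_div_iff₀ hr0]; linarith
  have hT1 : 1 < T := by rw [hTdef]; linarith
  have hT0 : 0 < T := by linarith
  have hTr : T * r < 1 := by
    have hx : (1 + 1/r) * r = r + 1 := by field_simp
    have : T * r = (r + 1) / 2 := by rw [hTdef, div_mul_eq_mul_div, hx]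
    rw [this]; linarith
  have hTr0 : 0 ≤ T * r := by positivity
  set g : ℕ → ℝ → Matrix (Fin n) (Fin n) ℂ :=
    fun k t => ((-1 : ℂ) ^ k * (t:ℂ) ^ (k+1) / (k+1)) • A ^ (k+1) with hgdef
  set g' : ℕ → ℝ → Matrix (Fin n) (Fin n) ℂ :=
    fun k t => ((-1 : ℂ) ^ k * (t:ℂ) ^ k) • A ^ (k+1) with hg'def
  set L : ℝ → Matrix (Fin n) (Fin n) ℂ := fun t => ∑' k, g k t with hLdef
  set Ds : ℝ → Matrix (Fin n) (Fin n) ℂ := fun t => ∑' k, g' k t with hDsdef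
  -- norm bounds
  have habs : ∀ (k : ℕ) (t : ℝ), |t| < T → ‖(-1 : ℂ) ^ k * (t:ℂ) ^ k‖ ≤ T ^ k := by
    intro k t ht
    rw [norm_mul, norm_pow, norm_pow, norm_neg, norm_one, one_pow, one_mul,
      Complex.norm_real, Real.norm_eq_abs]
    exact pow_le_pow_left₀ (abs_nonneg t) ht.le k
  have hng' : ∀ (k : ℕ) (t : ℝ), |t| < T → ‖g' k t‖ ≤ (C * r) * (T * r) ^ k := by
    intro k t ht
    rw [hg'def]
    simp only
    rw [norm_smul]
    calc ‖(-1 : ℂ) ^ k * (t:ℂ) ^ k‖ * ‖A ^ (k+1)‖ ≤ T ^ k * (C * r ^ (k+1)) :=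
          mul_le_mul (habs k t ht) (hb (k+1)) (norm_nonneg _) (by positivity)
    _ = (C * r) * (T * r) ^ k := by rw [mul_pow]; ring
  have hng : ∀ (k : ℕ) (t : ℝ), |t| < T → ‖g k t‖ ≤ (C * (T * r)) * (T * r) ^ k := by
    intro k t ht
    rw [hgdef]
    simp only
    rw [norm_smul]
    have hcoef : ‖(-1 : ℂ) ^ k * (t:ℂ) ^ (k+1) / ((k:ℂ)+1)‖ ≤ T ^ (k+1) := by
      rw [norm_div]
      have h1 : ‖(-1 : ℂ) ^ k * (t:ℂ) ^ (k+1)‖ ≤ T ^ (k+1) := by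
        rw [norm_mul, norm_pow, norm_pow, norm_neg, norm_one, one_pow, one_mul,
          Complex.norm_real, Real.norm_eq_abs]
        exact pow_le_pow_left₀ (abs_nonneg t) ht.le (k+1)
      have h2 : (1 : ℝ) ≤ ‖(k : ℂ) + 1‖ := by
        have h3 : ((k : ℂ) + 1) = ((k + 1 : ℕ) : ℂ) := by push_cast; ring
        rw [h3, Complex.norm_natCast]
        exact_mod_cast Nat.one_le_iff_ne_zero.mpr (Nat.succ_ne_zero k)
      calc ‖(-1 : ℂ) ^ k * (t:ℂ) ^ (k+1)‖ / ‖(k : ℂ) + 1‖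
          ≤ ‖(-1 : ℂ) ^ k * (t:ℂ) ^ (k+1)‖ / 1 :=
            div_le_div_of_nonneg_left (norm_nonneg _) one_pos h2
      _ = ‖(-1 : ℂ) ^ k * (t:ℂ) ^ (k+1)‖ := by rw [div_one]
      _ ≤ T ^ (k+1) := h1
    calc ‖(-1 : ℂ) ^ k * (t:ℂ) ^ (k+1) / ((k:ℂ)+1)‖ * ‖A ^ (k+1)‖
        ≤ T ^ (k+1) * (C * r ^ (k+1)) :=
          mul_le_mul hcoef (hb (k+1)) (norm_nonneg _) (by positivity)
    _ = (C * (T * r)) * (T * r) ^ k := by rw [mul_pow]; ring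
  have hsumTr : Summable (fun k : ℕ => (T * r) ^ k) := summable_geometric_of_lt_one hTr0 hTr
  have hsum_g' : ∀ t : ℝ, |t| < T → Summable (fun k => g' k t) := fun t ht =>
    Summable.of_norm_bounded (hsumTr.mul_left (C * r)) (fun k => hng' k t ht)
  have hsum_g : ∀ t : ℝ, |t| < T → Summable (fun k => g k t) := fun t ht =>
    Summable.of_norm_bounded (hsumTr.mul_left (C * (T * r))) (fun k => hng k t ht)
  -- commutation
  have hcomm_smul : ∀ (B : Matrix (Fin n) (Fin n) ℂ), Commute B A →
      ∀ (c : ℂ) (m : ℕ), Commute B (c • A ^ m) := fun B hB c m => (hB.pow_right m).smul_right c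
  have hcomm_L : ∀ (B : Matrix (Fin n) (Fin n) ℂ), Commute B A → ∀ t : ℝ, |t| < T →
      Commute B (L t) := fun B hB t ht =>
    commute_tsum_aux B (hsum_g t ht) (fun k => hcomm_smul B hB _ _)
  have hLA : ∀ t : ℝ, |t| < T → Commute (L t) A := fun t ht =>
    (hcomm_L A (Commute.refl A) t ht).symm
  have hLL : ∀ t t' : ℝ, |t| < T → |t'| < T → Commute (L t) (L t') := fun t t' ht ht' =>
    hcomm_L (L t) (hLA t ht) t' ht'
  -- key algebraic identity : Ds t * (1 + t • A) = A
  have hkey : ∀ t : ℝ, |t| < T → Ds t * (1 + (t:ℂ) • A) = A := by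
    intro t ht
    have hs := hsum_g' t ht
    have e3 : ∀ k, g' k t * ((t:ℂ) • A) = - g' (k+1) t := by
      intro k
      rw [hg'def]
      simp only
      rw [smul_mul_smul_comm, ← pow_succ,
        show ((-1 : ℂ) ^ k * (t:ℂ) ^ k) * (t:ℂ) = -((-1 : ℂ) ^ (k+1) * (t:ℂ) ^ (k+1)) by ring,
        neg_smul]
    have e4 : Ds t * ((t:ℂ) • A) = - ∑' k, g' (k+1) t := by
      rw [hDsdef]
      simp only
      rw [← hs.tsum_mul_right ((t:ℂ) • A),
        show (fun k => g' k t * ((t:ℂ) • A)) = fun k => - g' (k+1) t from funext e3]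
      exact tsum_neg
    have e5 : Ds t = g' 0 t + ∑' k, g' (k+1) t := hs.tsum_eq_zero_add
    have e6 : g' 0 t = A := by rw [hg'def]; simp
    rw [mul_add, mul_one, e4]
    rw [e5, e6]
    abel
  -- L 0 = 0
  have hgzero : (fun k => g k (0:ℝ)) = fun _ => (0 : Matrix (Fin n) (Fin n) ℂ) := by
    funext k
    rw [hgdef]
    simp [zero_pow (Nat.succ_ne_zero k)]
  have hL0 : L 0 = 0 := by
    rw [hLdef]
    simp only [hgzero, tsum_zero]
  -- term-by-term derivative
  have hgderiv : ∀ (k : ℕ) (t : ℝ), HasDerivAt (g k) (g' k t) t := by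
    intro k t
    have hz := (hasDerivAt_pow (k+1) ((t:ℂ))).const_mul ((-1:ℂ)^k / ((k:ℂ)+1))
    have h1 := hz.comp_ofReal
    have hne : ((k : ℂ) + 1) ≠ 0 := Nat.cast_add_one_ne_zero k
    have heq : (fun y : ℝ => (-1:ℂ)^k / ((k:ℂ)+1) * ((y:ℂ))^(k+1)) =
        fun y : ℝ => (-1:ℂ)^k * ((y:ℂ))^(k+1) / ((k:ℂ)+1) := by
      funext y; ring
    rw [heq] at h1
    have h2 := h1.smul_const (A ^ (k+1))
    have hval : ((-1:ℂ)^k / ((k:ℂ)+1) * (((k:ℕ)+1 : ℕ) * (t:ℂ)^((k:ℕ)+1-1))) = (-1:ℂ)^k * (t:ℂ)^k := by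
      push_cast
      field_simp
    rw [hval] at h2
    simp only [hgdef, hg'def]
    exact h2
  have hLderiv : ∀ t : ℝ, |t| < T → HasDerivAt L (Ds t) t := by
    intro t ht
    refine hasDerivAt_tsum_of_isPreconnected (hsumTr.mul_left (C * r)) Metric.isOpen_ball
      ((convex_ball (0:ℝ) T).isPreconnected) (fun k y _ => hgderiv k y)
      (fun k y hy => hng' k y (by simpa [Real.dist_eq] using hy))
      (Metric.mem_ball_self hT0) ?_ (by simpa [Real.dist_eq] using ht)
    rw [hgzero]
    exact summable_zero
  -- derivative of t ↦ exp (-(L t))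
  have hexpderiv : ∀ t₀ : ℝ, |t₀| < T →
      HasDerivAt (fun t => exp (-(L t))) (exp (-(L t₀)) * -(Ds t₀)) t₀ := by
    intro t₀ ht₀
    have hphi : HasDerivAt (fun t => L t₀ - L t) (-(Ds t₀)) t₀ :=
      (hLderiv t₀ ht₀).const_sub (L t₀)
    have hexp0 : HasFDerivAt exp (1 : Matrix (Fin n) (Fin n) ℂ →L[ℂ]
        Matrix (Fin n) (Fin n) ℂ) (L t₀ - L t₀) := by
      rw [sub_self]
      exact hasFDerivAt_exp_zero
    have hcomp : HasDerivAt (fun t => exp (L t₀ - L t)) (-(Ds t₀)) t₀ := by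
      have h2 := ((hexp0.restrictScalars ℝ).comp_hasDerivAt t₀ hphi)
      exact h2
    have hmul := hcomp.const_mul (exp (-(L t₀)))
    apply hmul.congr_of_eventuallyEq
    have hball : ∀ᶠ t in 𝓝 t₀, |t| < T := by
      have : Metric.ball (0:ℝ) T ∈ 𝓝 t₀ :=
        Metric.isOpen_ball.mem_nhds (by simpa [Real.dist_eq] using ht₀)
      filter_upwards [this] with t ht
      simpa [Real.dist_eq] using ht
    filter_upwards [hball] with t ht
    erw [← exp_add_of_commute (((hLL t₀ t₀ ht₀ ht₀).sub_right (hLL t₀ t ht₀ ht)).neg_left)]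
    congr 1
    abel
  -- F is constant on [0,1]
  set F : ℝ → Matrix (Fin n) (Fin n) ℂ := fun t => exp (-(L t)) * (1 + (t:ℂ) • A) with hFdef
  have hF : ∀ t₀ : ℝ, |t₀| < T → HasDerivAt F 0 t₀ := by
    intro t₀ ht₀
    have hlin : HasDerivAt (fun t : ℝ => 1 + (t:ℂ) • A) A t₀ := by
      have h1 : HasDerivAt (fun t : ℝ => (t:ℂ)) 1 t₀ := Complex.ofRealCLM.hasDerivAt
      have h2 := (h1.smul_const A).const_add (1 : Matrix (Fin n) (Fin n) ℂ)
      rw [one_smul] at h2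
      exact h2
    have hm := (hexpderiv t₀ ht₀).mul hlin
    have hz : exp (-(L t₀)) * -(Ds t₀) * (1 + (t₀:ℂ) • A) + exp (-(L t₀)) * A = 0 := by
      rw [mul_assoc, neg_mul, hkey t₀ ht₀, mul_neg, neg_add_cancel]
    rw [hz] at hm
    exact hm
  have hsubset : ∀ t ∈ Set.Icc (0:ℝ) 1, |t| < T := by
    intro t ht
    rw [abs_of_nonneg ht.1]
    linarith [ht.2]
  have hconst := constant_of_has_deriv_right_zero
    (f := F) (a := 0) (b := 1)
    (fun t ht => ((hF t (hsubset t ht)).continuousAt).continuousWithinAt)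
    (fun t ht => (hF t (hsubset t (Set.Ico_subset_Icc_self ht))).hasDerivWithinAt)
    1 (Set.right_mem_Icc.mpr zero_le_one)
  have hF0 : F 0 = 1 := by
    rw [hFdef]
    simp [hL0, exp_zero]
  have hF1 : exp (-(L 1)) * (1 + A) = 1 := by
    have h1 : F 1 = 1 := hconst.trans hF0
    rw [hFdef] at h1
    simpa using h1
  have h1T : |(1:ℝ)| < T := by rw [abs_one]; exact hT1
  have hER : exp (L 1) * exp (-(L 1)) = 1 := by
    erw [← exp_add_of_commute ((hLL 1 1 h1T h1T).neg_right), add_neg_cancel, exp_zero]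
  have hfinal : exp (L 1) = 1 + A := by
    calc exp (L 1) = exp (L 1) * (exp (-(L 1)) * (1 + A)) := by rw [hF1, mul_one]
    _ = (exp (L 1) * exp (-(L 1))) * (1 + A) := by rw [mul_assoc]
    _ = 1 + A := by rw [hER, one_mul]
  have hsum_eq : (∑' k : ℕ, ((-1 : ℂ) ^ k / (k + 1)) • A ^ (k+1)) = L 1 := by
    rw [hLdef]
    refine tsum_congr fun k => ?_
    rw [hgdef]
    norm_num
  rw [hsum_eq]
  exact hfinal

end Aux

/-- Let `R = N/D` be the `[m+p/m]` Padé approximant to `e^z`, and let `X` be such that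
`ρ(e^{−X} R(X) − I) < 1` and `ρ(X)` is smaller than the smallest modulus of a zero of
`D`.  Then, with `h(X) = log(e^{−X} R(X))` (principal logarithm),
`R(X) = e^{X + h(X)}` and `X` commutes with `h(X)`. -/
theorem pade_backward_error_matrix {n : ℕ} (m p : ℕ)
    (N D : Polynomial ℂ) (hN : N.natDegree ≤ m + p) (hD : D.natDegree ≤ m)
    (hD0 : D.eval 0 = 1)
    (hPade : (fun z : ℂ => Complex.exp z - N.eval z / D.eval z)
      =O[𝓝[≠] (0 : ℂ)] fun z => z ^ (2 * m + p + 1))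
    (X : Matrix (Fin n) (Fin n) ℂ)
    (hpoles : ∀ μ ∈ spectrum ℂ X, ∀ z : ℂ, D.eval z = 0 → ‖μ‖ < ‖z‖)
    (hρ : ∀ μ ∈ spectrum ℂ
        (NormedSpace.exp (-X) * padeEvalMat N D X - 1), ‖μ‖ < 1) :
    NormedSpace.exp (X + principalLog (NormedSpace.exp (-X) * padeEvalMat N D X)) =
        padeEvalMat N D X ∧
      X * principalLog (NormedSpace.exp (-X) * padeEvalMat N D X) =
        principalLog (NormedSpace.exp (-X) * padeEvalMat N D X) * X := by
  rcases Nat.eq_zero_or_pos n with hn | hn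
  · subst hn
    haveI : Subsingleton (Matrix (Fin 0) (Fin 0) ℂ) := ⟨fun a b => by ext i; exact i.elim0⟩
    exact ⟨Subsingleton.elim _ _, Subsingleton.elim _ _⟩
  haveI : Nonempty (Fin n) := ⟨⟨0, hn⟩⟩
  letI : SeminormedRing (Matrix (Fin n) (Fin n) ℂ) := Matrix.linftyOpSemiNormedRing
  letI : NormedRing (Matrix (Fin n) (Fin n) ℂ) := Matrix.linftyOpNormedRing
  letI : NormedAlgebra ℂ (Matrix (Fin n) (Fin n) ℂ) := Matrix.linftyOpNormedAlgebra
  letI : NormedAlgebra ℚ (Matrix (Fin n) (Fin n) ℂ) := Matrix.linftyOpNormedAlgebra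
  set M : Matrix (Fin n) (Fin n) ℂ := NormedSpace.exp (-X) * padeEvalMat N D X with hMdef
  -- `D(X)` is invertible
  have hu : IsUnit (Polynomial.aeval X D) := by
    by_contra h0
    have h0' : (0:ℂ) ∈ spectrum ℂ (Polynomial.aeval X D) := (spectrum.zero_mem_iff (R := ℂ)).mpr h0
    rw [spectrum.map_polynomial_aeval_of_nonempty X D
      (spectrum.nonempty_of_isAlgClosed_of_finiteDimensional ℂ X)] at h0'
    obtain ⟨μ, hμ, hev⟩ := h0'
    exact absurd (hpoles μ hμ μ (by simpa using hev)) (lt_irrefl _)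
  -- commutation of `X` with `M`
  have hXN : Commute X (Polynomial.aeval X N) := commute_aeval_aux X N
  have hXD : Commute X (Polynomial.aeval X D) := commute_aeval_aux X D
  have hXDinv : Commute X (Polynomial.aeval X D)⁻¹ := by
    set B := Polynomial.aeval X D with hB
    have hdet : IsUnit B.det := (Matrix.isUnit_iff_isUnit_det _).mp hu
    have h1 : B * B⁻¹ = 1 := Matrix.mul_nonsing_inv _ hdet
    have h2 : B⁻¹ * B = 1 := Matrix.nonsing_inv_mul _ hdet
    show X * B⁻¹ = B⁻¹ * X
    calc X * B⁻¹ = B⁻¹ * B * (X * B⁻¹) := by rw [h2, one_mul]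
    _ = B⁻¹ * (X * B) * B⁻¹ := by rw [hXD.eq]; noncomm_ring
    _ = B⁻¹ * X * (B * B⁻¹) := by noncomm_ring
    _ = B⁻¹ * X := by rw [h1, mul_one]
  have hXexp : Commute X (NormedSpace.exp (-X)) :=
    Commute.exp_right ((Commute.refl X).neg_right)
  have hXM : Commute X M := by
    rw [hMdef]
    unfold padeEvalMat
    exact hXexp.mul_right (hXN.mul_right hXDinv)
  have hXA : Commute X (M - 1) := hXM.sub_right (Commute.one_right X)
  have hsummable : Summable (fun k : ℕ => ((-1 : ℂ) ^ k / (k + 1)) • (M - 1) ^ (k + 1)) :=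
    principalLog_summable_aux (M - 1) hρ
  have hXh : Commute X (principalLog M) := by
    unfold principalLog
    exact commute_tsum_aux X hsummable (fun k => (hXA.pow_right (k+1)).smul_right _)
  have hexplog : NormedSpace.exp (principalLog M) = M := by
    have h1 : NormedSpace.exp (principalLog M) = 1 + (M - 1) := by
      unfold principalLog
      exact exp_log_aux (M - 1) hρ
    rw [h1]
    abel
  refine ⟨?_, hXh.eq⟩
  calc NormedSpace.exp (X + principalLog M)
      = NormedSpace.exp X * NormedSpace.exp (principalLog M) :=
        NormedSpace.exp_add_of_commute hXh
  _ = NormedSpace.exp X * (NormedSpace.exp (-X) * padeEvalMat N D X) := by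
        rw [hexplog]
  _ = (NormedSpace.exp X * NormedSpace.exp (-X)) * padeEvalMat N D X := by
        rw [mul_assoc]
  _ = padeEvalMat N D X := by
        erw [← NormedSpace.exp_add_of_commute ((Commute.refl X).neg_right), add_neg_cancel,
          NormedSpace.exp_zero, one_mul]
end
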